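/- Let G be a finite connected graph with n vertices, c: V(G) → ℝ_{>0}, and κ: V(G) → ℤ with 0 ≤ κ(u) ≤ d(u) for every vertex u. Then β(G,c,κ) = ∑_{u∈V(G)} c(u)(d(u)−κ(u))(d(u)−κ(u)+1)/(2(d(u)+1)) if and only if either (i) κ(u) = d(u) for every vertex u, or (ii) c is constant and κ(u) = 0 for every vertex u, or (iii) G is a complete graph, c and κ are constant with 0 < κ < n−1. -/

import Mathlib

set_option linter.unusedSectionVars false
set_option linter.unusedVariables false
set_option maxHeartbeats 1000000

variable {V : Type*} [Fintype V] [DecidableEq V]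

/-- A list of vertices witnesses κ-degeneracy: each vertex has at most κ of it
neighbors among the earlier vertices of the ordering. -/
def DegenList (G : SimpleGraph V) [DecidableRel G.Adj] (κ : V → ℤ) (l : List V) : Prop :=
  l.Nodup ∧ ∀ i : Fin l.length,
    ((((l.take i).toFinset).filter (fun v => G.Adj (l.get i) v)).card : ℤ) ≤ κ (l.get i)

/-- A set of vertices is κ-degenerate if it admits a suitable linear ordering. -/
def IsDegen (G : SimpleGraph V) [DecidableRel G.Adj] (κ : V → ℤ) (I : Finset V) : Prop :=
  ∃ l : List V, l.toFinset = I ∧ DegenList G κ l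

/-- Minimum total c-weighted increase ι making the whole vertex set (κ+ι)-degenerate. -/
noncomputable def betaW (G : SimpleGraph V) [DecidableRel G.Adj] (c : V → ℝ) (κ : V → ℤ) : ℝ :=
  sInf {x : ℝ | ∃ ι : V → ℤ, (∀ u, 0 ≤ ι u) ∧
    IsDegen G (fun u => κ u + ι u) Finset.univ ∧ x = ∑ u : V, c u * (ι u : ℝ)}

open Finset

namespace XBeta

/-- earlier-neighbor count under a position equivalence. -/
def E (G : SimpleGraph V) [DecidableRel G.Adj] (σ : V ≃ Fin (Fintype.card V)) (u : V) : ℕ :=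
  (univ.filter fun v => G.Adj u v ∧ σ v < σ u).card

/-- earlier-neighbor count in a list. -/
def ecount (G : SimpleGraph V) [DecidableRel G.Adj] (l : List V) (u : V) : ℕ :=
  (((l.take (l.idxOf u)).toFinset).filter (fun v => G.Adj u v)).card

lemma mem_take_iff {l : List V} (hl : l.Nodup) {v : V} (hv : v ∈ l) (k : ℕ) :
    v ∈ l.take k ↔ l.idxOf v < k := by
  constructor
  · intro h
    obtain ⟨i, hi, hgi⟩ := List.getElem_of_mem h
    have hi' : i < l.length := lt_of_lt_of_le hi (by simp [List.length_take])
    have : l[i] = v := by rw [← hgi, List.getElem_take]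
    rw [← this, List.Nodup.idxOf_getElem hl]
    simp [List.length_take] at hi
    exact hi.1
  · intro h
    have hlen : l.idxOf v < l.length := List.idxOf_lt_length_iff.2 hv
    have h2 : l.idxOf v < (l.take k).length := by simp [List.length_take]; omega
    have : (l.take k)[l.idxOf v] = v := by
      rw [List.getElem_take]; exact List.getElem_idxOf hlen
    exact this ▸ List.getElem_mem h2

variable {l : List V}

lemma length_eq (hl : l.Nodup) (hu : l.toFinset = univ) : l.length = Fintype.card V := by
  rw [← List.toFinset_card_of_nodup hl, hu, Finset.card_univ]

/-- position equivalence from a list enumerating all vertices -/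
noncomputable def mkσ (l : List V) (hl : l.Nodup) (hu : l.toFinset = univ) :
    V ≃ Fin (Fintype.card V) :=
  Equiv.ofBijective (fun v => ⟨l.idxOf v, by
      rw [← length_eq hl hu]; exact List.idxOf_lt_length_iff.2 (by simp [← List.mem_toFinset, hu])⟩)
    ((Fintype.bijective_iff_injective_and_card _).2 ⟨fun a b hab => by
      have ha : l.idxOf a < l.length := List.idxOf_lt_length_iff.2 (by simp [← List.mem_toFinset, hu])
      have h1 : l[l.idxOf a] = a := List.getElem_idxOf ha
      have hb : l.idxOf b < l.length := List.idxOf_lt_length_iff.2 (by simp [← List.mem_toFinset, hu])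
      have h2 : l[l.idxOf b] = b := List.getElem_idxOf hb
      simp only [Fin.mk.injEq] at hab
      simp only [hab] at h1
      rw [← h1]; exact h2, by simp⟩)

lemma mkσ_apply (hl : l.Nodup) (hu : l.toFinset = univ) (v : V) :
    ((mkσ l hl hu) v : ℕ) = l.idxOf v := rfl

lemma E_mkσ (G : SimpleGraph V) [DecidableRel G.Adj] (hl : l.Nodup) (hu : l.toFinset = univ)
    (u : V) : E G (mkσ l hl hu) u = ecount G l u := by
  unfold E ecount
  congr 1
  ext v
  simp only [mem_filter, mem_univ, true_and, List.mem_toFinset]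
  have hv : v ∈ l := by simp [← List.mem_toFinset, hu]
  rw [mem_take_iff hl hv]
  show G.Adj u v ∧ (mkσ l hl hu v) < (mkσ l hl hu u) ↔ _
  rw [Fin.lt_def]
  constructor
  · rintro ⟨h1, h2⟩; exact ⟨h2, h1⟩
  · rintro ⟨h1, h2⟩; exact ⟨h2, h1⟩

section
variable (G : SimpleGraph V) [DecidableRel G.Adj] (c : V → ℝ) (κ : V → ℤ)

noncomputable def costE (σ : V ≃ Fin (Fintype.card V)) : ℝ :=
  ∑ u : V, c u * ((max 0 ((E G σ u : ℤ) - κ u) : ℤ) : ℝ)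

def SS : Set ℝ := {x : ℝ | ∃ ι : V → ℤ, (∀ u, 0 ≤ ι u) ∧
    IsDegen G (fun u => κ u + ι u) Finset.univ ∧ x = ∑ u : V, c u * (ι u : ℝ)}

lemma betaW_eq_sInf : betaW G c κ = sInf (SS G c κ) := rfl

variable {G c κ}

/-- every position equivalence yields a feasible incentive assignment. -/
lemma costE_mem (σ : V ≃ Fin (Fintype.card V)) : costE G c κ σ ∈ SS G c κ := by
  classical
  refine ⟨fun u => max 0 ((E G σ u : ℤ) - κ u), fun u => le_max_left _ _, ?_, rfl⟩
  set l : List V := List.ofFn (fun i => σ.symm i) with hldef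
  have hnd : l.Nodup := List.nodup_ofFn.2 (σ.symm.injective)
  have huniv : l.toFinset = univ := by
    ext v
    simp only [List.mem_toFinset, mem_univ, iff_true, hldef, List.mem_ofFn]
    exact ⟨σ v, by simp⟩
  have hidx : ∀ v : V, l.idxOf v = (σ v : ℕ) := by
    intro v
    have hlen : (σ v : ℕ) < l.length := by simp [hldef]
    have h3 : l[(σ v : ℕ)] = v := by simp [hldef]
    have h2 : l.idxOf l[(σ v : ℕ)] = (σ v : ℕ) := List.Nodup.idxOf_getElem hnd _ hlen
    rw [h3] at h2; exact h2
  have hmk : mkσ l hnd huniv = σ := by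
    apply Equiv.ext
    intro v
    apply Fin.ext
    rw [mkσ_apply, hidx]
  refine ⟨l, huniv, hnd, ?_⟩
  intro i
  set u := l.get i with hu
  have hiu : l.idxOf u = (i : ℕ) := List.Nodup.idxOf_getElem hnd _ i.isLt
  have hE : ecount G l u = E G σ u := by rw [← E_mkσ G hnd huniv, hmk]
  have : (((l.take (i : ℕ)).toFinset).filter (fun v => G.Adj u v)).card = ecount G l u := by
    unfold ecount; rw [hiu]
  rw [this, hE]
  show ((E G σ u : ℕ) : ℤ) ≤ κ u + max 0 ((E G σ u : ℤ) - κ u)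
  linarith [le_max_right (0:ℤ) ((E G σ u : ℤ) - κ u)]

/-- every feasible assignment costs at least some ordering cost. -/
lemma exists_costE_le {x : ℝ} (hx : x ∈ SS G c κ) (hc : ∀ u, 0 < c u) :
    ∃ σ : V ≃ Fin (Fintype.card V), costE G c κ σ ≤ x := by
  obtain ⟨ι, hι0, ⟨l, huniv, hnd, hdeg⟩, rfl⟩ := hx
  refine ⟨mkσ l hnd huniv, ?_⟩
  unfold costE
  apply Finset.sum_le_sum
  intro u _
  have hcu := (hc u).le
  have h1 : max 0 ((E G (mkσ l hnd huniv) u : ℤ) - κ u) ≤ ι u := by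
    have hmem : u ∈ l := by rw [← List.mem_toFinset, huniv]; exact mem_univ u
    have hlt : l.idxOf u < l.length := List.idxOf_lt_length_iff.2 hmem
    have hget : l.get ⟨l.idxOf u, hlt⟩ = u := List.getElem_idxOf hlt
    have hdg := hdeg ⟨l.idxOf u, hlt⟩
    rw [hget] at hdg
    simp only [Fin.val_mk] at hdg
    have hE : E G (mkσ l hnd huniv) u = ecount G l u := E_mkσ G hnd huniv u
    unfold ecount at hE
    rw [hE]
    refine max_le (hι0 u) ?_
    omega
  have := (hc u).le
  calc c u * ((max 0 ((E G (mkσ l hnd huniv) u : ℤ) - κ u) : ℤ) : ℝ)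
      ≤ c u * (ι u : ℝ) := by
        apply mul_le_mul_of_nonneg_left _ this
        exact_mod_cast h1

lemma SS_nonempty : (SS G c κ).Nonempty :=
  ⟨_, costE_mem (Fintype.equivFin V)⟩

lemma SS_bddBelow (hc : ∀ u, 0 < c u) : BddBelow (SS G c κ) := by
  refine ⟨0, fun x hx => ?_⟩
  obtain ⟨ι, hι0, _, rfl⟩ := hx
  apply Finset.sum_nonneg
  intro u _
  have h0 : (0:ℝ) ≤ (ι u : ℝ) := by exact_mod_cast hι0 u
  exact mul_nonneg (hc u).le h0

lemma betaW_le_costE (hc : ∀ u, 0 < c u) (σ : V ≃ Fin (Fintype.card V)) :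
    betaW G c κ ≤ costE G c κ σ :=
  csInf_le (SS_bddBelow hc) (costE_mem σ)

lemma le_betaW (hc : ∀ u, 0 < c u) {m : ℝ} (hm : ∀ σ : V ≃ Fin (Fintype.card V), m ≤ costE G c κ σ) :
    m ≤ betaW G c κ := by
  apply le_csInf SS_nonempty
  intro x hx
  obtain ⟨σ, hσ⟩ := exists_costE_le hx hc
  exact le_trans (hm σ) hσ

end

section Cpre
variable (G : SimpleGraph V) [DecidableRel G.Adj]

lemma E_eq_card_filter_nbr (σ : V ≃ Fin (Fintype.card V)) (u : V) :
    E G σ u = ((G.neighborFinset u).filter (fun v => σ v < σ u)).card := by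
  unfold E; congr 1; ext v
  simp [SimpleGraph.mem_neighborFinset, and_comm]

lemma E_le_degree (σ : V ≃ Fin (Fintype.card V)) (u : V) : E G σ u ≤ G.degree u := by
  rw [E_eq_card_filter_nbr, ← SimpleGraph.card_neighborFinset_eq_degree]
  exact card_filter_le _ _

lemma card_above (σ : V ≃ Fin (Fintype.card V)) (u : V) :
    ((G.neighborFinset u).filter (fun v => σ u < σ v)).card = G.degree u - E G σ u := by
  have h1 : ((G.neighborFinset u).filter (fun v => σ v < σ u)).card
      + ((G.neighborFinset u).filter (fun v => ¬ (σ v < σ u))).card = G.degree u := by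
    rw [Finset.card_filter_add_card_filter_not]
    exact SimpleGraph.card_neighborFinset_eq_degree G u
  have h2 : (G.neighborFinset u).filter (fun v => ¬ (σ v < σ u))
      = (G.neighborFinset u).filter (fun v => σ u < σ v) := by
    apply filter_congr
    intro v hv
    have hne : v ≠ u := G.ne_of_adj ((SimpleGraph.mem_neighborFinset G u v).1 hv).symm
    have : σ v ≠ σ u := fun h => hne (σ.injective h)
    simp only [not_lt, eq_iff_iff]
    exact ⟨fun h => lt_of_le_of_ne h (Ne.symm this), le_of_lt⟩
  rw [h2] at h1
  rw [← E_eq_card_filter_nbr] at h1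
  omega



end Cpre

section Cblock2
variable (G : SimpleGraph V) [DecidableRel G.Adj]

/-- positions of neighbors of `u` above `u`. -/
def AboveF (σ : V ≃ Fin (Fintype.card V)) (u : V) : Finset (Fin (Fintype.card V)) :=
  ((G.neighborFinset u).filter (fun v => σ u < σ v)).image σ

/-- positions of neighbors of `u` below `u`. -/
def BelowF (σ : V ≃ Fin (Fintype.card V)) (u : V) : Finset (Fin (Fintype.card V)) :=
  ((G.neighborFinset u).filter (fun v => σ v < σ u)).image σ

lemma card_aboveF (σ : V ≃ Fin (Fintype.card V)) (u : V) :
    (AboveF G σ u).card = G.degree u - E G σ u := by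
  rw [AboveF, card_image_of_injective _ σ.injective, card_above]

lemma card_belowF (σ : V ≃ Fin (Fintype.card V)) (u : V) :
    (BelowF G σ u).card = E G σ u := by
  rw [BelowF, card_image_of_injective _ σ.injective, E_eq_card_filter_nbr]

noncomputable def imap (σ : V ≃ Fin (Fintype.card V)) (u : V) : V ≃ Fin (Fintype.card V) :=
  σ.trans (Equiv.swap (σ u)
    (if h : (AboveF G σ u).Nonempty then (AboveF G σ u).min' h else σ u))

noncomputable def jmap (σ : V ≃ Fin (Fintype.card V)) (u : V) : V ≃ Fin (Fintype.card V) :=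
  σ.trans (Equiv.swap (σ u)
    (if h : (BelowF G σ u).Nonempty then (BelowF G σ u).max' h else σ u))

section keylemmas

variable {G}
variable {σ : V ≃ Fin (Fintype.card V)} {u : V}

-- facts about q = min' of Above
lemma q_spec (h : (AboveF G σ u).Nonempty) :
    ∃ w : V, G.Adj u w ∧ σ u < σ w ∧ σ w = (AboveF G σ u).min' h ∧
      (∀ v : V, G.Adj u v → σ u < σ v → (AboveF G σ u).min' h ≤ σ v) := by
  have hm := Finset.min'_mem _ h
  simp only [AboveF, mem_image] at hm
  obtain ⟨w, hw, hws⟩ := hm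
  rw [mem_filter, SimpleGraph.mem_neighborFinset] at hw
  refine ⟨w, hw.1, hw.2, hws, fun v hv hlt => ?_⟩
  apply Finset.min'_le
  simp only [AboveF, mem_image]
  exact ⟨v, by rw [mem_filter, SimpleGraph.mem_neighborFinset]; exact ⟨hv, hlt⟩, rfl⟩

lemma p_spec (h : (BelowF G σ u).Nonempty) :
    ∃ w : V, G.Adj u w ∧ σ w < σ u ∧ σ w = (BelowF G σ u).max' h ∧
      (∀ v : V, G.Adj u v → σ v < σ u → σ v ≤ (BelowF G σ u).max' h) := by
  have hm := Finset.max'_mem _ h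
  simp only [BelowF, mem_image] at hm
  obtain ⟨w, hw, hws⟩ := hm
  rw [mem_filter, SimpleGraph.mem_neighborFinset] at hw
  refine ⟨w, hw.1, hw.2, hws, fun v hv hlt => ?_⟩
  apply Finset.le_max'
  simp only [BelowF, mem_image]
  exact ⟨v, by rw [mem_filter, SimpleGraph.mem_neighborFinset]; exact ⟨hv, hlt⟩, rfl⟩

lemma E_imap (h : (AboveF G σ u).Nonempty) : E G (imap G σ u) u = E G σ u + 1 := by
  obtain ⟨w, hadj, hlt, hqw, hmin⟩ := q_spec h
  set q := (AboveF G σ u).min' h with hq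
  have himap : ∀ v : V, (imap G σ u) v = Equiv.swap (σ u) q (σ v) := by
    intro v; simp [imap, hq, h]
  have hwu : w ≠ u := hadj.ne'
  unfold E
  have hins : (univ.filter fun v => G.Adj u v ∧ (imap G σ u) v < (imap G σ u) u)
      = insert w (univ.filter fun v => G.Adj u v ∧ σ v < σ u) := by
    have hiu : (imap G σ u) u = q := by rw [himap, Equiv.swap_apply_left]
    ext v
    rw [mem_insert, mem_filter, mem_filter, hiu, himap v]
    constructor
    · rintro ⟨-, hv, hlt'⟩
      by_cases hvw : v = w
      · exact Or.inl hvw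
      · right
        have hvu : v ≠ u := hv.ne'
        have h1 : σ v ≠ σ u := fun hh => hvu (σ.injective hh)
        have h2 : σ v ≠ q := by rw [← hqw]; exact fun hh => hvw (σ.injective hh)
        rw [Equiv.swap_apply_of_ne_of_ne h1 h2] at hlt'
        refine ⟨mem_univ v, hv, ?_⟩
        by_contra hge
        push_neg at hge
        have : σ u < σ v := lt_of_le_of_ne hge (Ne.symm h1)
        exact absurd hlt' (not_lt.2 (hmin v hv this))
    · rintro (rfl | ⟨-, hv, hlt'⟩)
      · refine ⟨mem_univ v, hadj, ?_⟩
        rw [hqw, Equiv.swap_apply_right]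
        rw [← hqw]; exact hlt
      · refine ⟨mem_univ v, hv, ?_⟩
        have hvu : v ≠ u := hv.ne'
        have h1 : σ v ≠ σ u := fun hh => hvu (σ.injective hh)
        have h2 : σ v ≠ q := by
          intro hh
          rw [hh, ← hqw] at hlt'
          exact absurd hlt' (not_lt.2 hlt.le)
        rw [Equiv.swap_apply_of_ne_of_ne h1 h2]
        rw [← hqw]
        exact hlt'.trans hlt
  have hwmem : w ∉ filter (fun v => G.Adj u v ∧ σ v < σ u) univ := by
    rw [mem_filter]
    push_neg
    intro _ _
    exact hlt.le
  rw [hins, card_insert_of_notMem hwmem]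

lemma E_jmap (h : (BelowF G σ u).Nonempty) : E G (jmap G σ u) u + 1 = E G σ u := by
  obtain ⟨w, hadj, hlt, hpw, hmax⟩ := p_spec h
  set p := (BelowF G σ u).max' h with hp
  have hjmap : ∀ v : V, (jmap G σ u) v = Equiv.swap (σ u) p (σ v) := by
    intro v; simp [jmap, hp, h]
  have hwu : w ≠ u := hadj.ne'
  have hju : (jmap G σ u) u = p := by rw [hjmap, Equiv.swap_apply_left]
  unfold E
  have hers : (univ.filter fun v => G.Adj u v ∧ (jmap G σ u) v < (jmap G σ u) u)
      = (univ.filter fun v => G.Adj u v ∧ σ v < σ u).erase w := by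
    ext v
    rw [mem_erase, mem_filter, mem_filter, hju, hjmap v]
    constructor
    · rintro ⟨-, hv, hlt'⟩
      have hvu : v ≠ u := hv.ne'
      have h1 : σ v ≠ σ u := fun hh => hvu (σ.injective hh)
      by_cases hvw : v = w
      · subst hvw
        rw [hpw, Equiv.swap_apply_right] at hlt'
        rw [← hpw] at hlt'
        exact absurd hlt' (not_lt.2 hlt.le)
      · have h2 : σ v ≠ p := by rw [← hpw]; exact fun hh => hvw (σ.injective hh)
        rw [Equiv.swap_apply_of_ne_of_ne h1 h2] at hlt'
        refine ⟨hvw, mem_univ v, hv, ?_⟩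
        rw [← hpw] at hlt'
        exact hlt'.trans hlt
    · rintro ⟨hvw, -, hv, hlt'⟩
      have hvu : v ≠ u := hv.ne'
      have h1 : σ v ≠ σ u := fun hh => hvu (σ.injective hh)
      have h2 : σ v ≠ p := by rw [← hpw]; exact fun hh => hvw (σ.injective hh)
      refine ⟨mem_univ v, hv, ?_⟩
      rw [Equiv.swap_apply_of_ne_of_ne h1 h2]
      exact lt_of_le_of_ne (hmax v hv hlt') h2
  have hwmem : w ∈ univ.filter fun v => G.Adj u v ∧ σ v < σ u := by
    rw [mem_filter]; exact ⟨mem_univ w, hadj, hlt⟩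
  rw [hers, card_erase_of_mem hwmem]
  have : 1 ≤ (univ.filter fun v => G.Adj u v ∧ σ v < σ u).card :=
    card_pos.2 ⟨w, hwmem⟩
  show _ - 1 + 1 = _
  omega

lemma imap_jmap (h : (AboveF G σ u).Nonempty) : jmap G (imap G σ u) u = σ := by
  obtain ⟨w, hadj, hlt, hqw, hmin⟩ := q_spec h
  set q := (AboveF G σ u).min' h with hq
  set τ := imap G σ u with hτ
  have himap : ∀ v : V, τ v = Equiv.swap (σ u) q (σ v) := by
    intro v; simp [hτ, imap, hq, h]
  have hτu : τ u = q := by rw [himap, Equiv.swap_apply_left]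
  have hτw : τ w = σ u := by rw [himap, hqw, Equiv.swap_apply_right]
  -- σ u belongs to BelowF τ u
  have hσuq : σ u ≠ q := ne_of_lt (hqw ▸ hlt)
  have hmem : σ u ∈ BelowF G τ u := by
    simp only [BelowF, mem_image]
    refine ⟨w, ?_, hτw⟩
    rw [mem_filter, SimpleGraph.mem_neighborFinset]
    exact ⟨hadj, by rw [hτw, hτu]; rw [← hqw]; exact hlt⟩
  have hne : (BelowF G τ u).Nonempty := ⟨σ u, hmem⟩
  have hub : ∀ x ∈ BelowF G τ u, x ≤ σ u := by
    intro x hx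
    simp only [BelowF, mem_image] at hx
    obtain ⟨v, hv, rfl⟩ := hx
    rw [mem_filter, SimpleGraph.mem_neighborFinset] at hv
    obtain ⟨hv1, hv2⟩ := hv
    by_cases hvw : v = w
    · subst hvw; rw [hτw]
    · have hvu : v ≠ u := hv1.ne'
      have h1 : σ v ≠ σ u := fun hh => hvu (σ.injective hh)
      have h2 : σ v ≠ q := by rw [← hqw]; exact fun hh => hvw (σ.injective hh)
      rw [himap v, Equiv.swap_apply_of_ne_of_ne h1 h2]
      rw [hτu, himap v, Equiv.swap_apply_of_ne_of_ne h1 h2] at hv2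
      by_contra hgt
      push_neg at hgt
      have : σ u < σ v := hgt
      exact absurd hv2 (not_lt.2 (hmin v hv1 this))
  have hmax : (BelowF G τ u).max' hne = σ u :=
    le_antisymm (Finset.max'_le _ _ _ hub) (Finset.le_max' _ _ hmem)
  apply Equiv.ext
  intro x
  have : jmap G τ u x = Equiv.swap (τ u) (σ u) (τ x) := by
    simp [jmap, hne, hmax]
  rw [this, hτu, himap]
  rw [Equiv.swap_comm q (σ u)]
  exact Equiv.swap_apply_self _ _ _

lemma jmap_imap (h : (BelowF G σ u).Nonempty) : imap G (jmap G σ u) u = σ := by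
  obtain ⟨w, hadj, hlt, hpw, hmax⟩ := p_spec h
  set p := (BelowF G σ u).max' h with hp
  set τ := jmap G σ u with hτ
  have hjmap : ∀ v : V, τ v = Equiv.swap (σ u) p (σ v) := by
    intro v; simp [hτ, jmap, hp, h]
  have hτu : τ u = p := by rw [hjmap, Equiv.swap_apply_left]
  have hτw : τ w = σ u := by rw [hjmap, hpw, Equiv.swap_apply_right]
  have hmem : σ u ∈ AboveF G τ u := by
    simp only [AboveF, mem_image]
    refine ⟨w, ?_, hτw⟩
    rw [mem_filter, SimpleGraph.mem_neighborFinset]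
    exact ⟨hadj, by rw [hτw, hτu]; rw [← hpw]; exact hlt⟩
  have hne : (AboveF G τ u).Nonempty := ⟨σ u, hmem⟩
  have hlb : ∀ x ∈ AboveF G τ u, σ u ≤ x := by
    intro x hx
    simp only [AboveF, mem_image] at hx
    obtain ⟨v, hv, rfl⟩ := hx
    rw [mem_filter, SimpleGraph.mem_neighborFinset] at hv
    obtain ⟨hv1, hv2⟩ := hv
    by_cases hvw : v = w
    · subst hvw; rw [hτw]
    · have hvu : v ≠ u := hv1.ne'
      have h1 : σ v ≠ σ u := fun hh => hvu (σ.injective hh)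
      have h2 : σ v ≠ p := by rw [← hpw]; exact fun hh => hvw (σ.injective hh)
      rw [hjmap v, Equiv.swap_apply_of_ne_of_ne h1 h2]
      rw [hτu, hjmap v, Equiv.swap_apply_of_ne_of_ne h1 h2] at hv2
      by_contra hgt
      push_neg at hgt
      have : σ v < σ u := hgt
      exact absurd hv2 (not_lt.2 (hmax v hv1 this))
  have hmin : (AboveF G τ u).min' hne = σ u :=
    le_antisymm (Finset.min'_le _ _ hmem) (Finset.le_min' _ _ _ hlb)
  apply Equiv.ext
  intro x
  have : imap G τ u x = Equiv.swap (τ u) (σ u) (τ x) := by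
    simp [imap, hne, hmin]
  rw [this, hτu, hjmap]
  rw [Equiv.swap_comm p (σ u)]
  exact Equiv.swap_apply_self _ _ _

end keylemmas


end Cblock2

lemma gauss_max (d : ℕ) (k : ℤ) (h0 : 0 ≤ k) (hd : k ≤ (d:ℤ)) :
    (∑ j ∈ Finset.range (d+1), max 0 ((j:ℤ) - k)) * 2 = ((d:ℤ) - k) * ((d:ℤ) - k + 1) := by
  have hkd : k.toNat ≤ d := by omega
  induction d, hkd using Nat.le_induction with
  | base =>
    have hsum : ∑ j ∈ Finset.range (k.toNat+1), max 0 ((j:ℤ) - k) = 0 := by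
      apply Finset.sum_eq_zero
      intro j hj
      rw [Finset.mem_range] at hj
      apply max_eq_left
      omega
    rw [hsum]
    have : ((k.toNat : ℤ)) = k := by omega
    rw [this]
    ring
  | succ n hn IH =>
    have hkn : k ≤ (n:ℤ) := by omega
    have IH' := IH hkn
    rw [Finset.sum_range_succ]
    have hmax : max 0 ((n:ℤ)+1 - k) = (n:ℤ)+1 - k := max_eq_right (by omega)
    push_cast
    push_cast at IH'
    rw [hmax, add_mul, IH']
    ring

section fibers
variable (G : SimpleGraph V) [DecidableRel G.Adj]

lemma card_fiber_succ (u : V) {j : ℕ} (hj : j < G.degree u) :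
    ((univ : Finset (V ≃ Fin (Fintype.card V))).filter (fun σ => E G σ u = j)).card
      = ((univ : Finset (V ≃ Fin (Fintype.card V))).filter (fun σ => E G σ u = j + 1)).card := by
  apply Finset.card_bij' (fun σ _ => imap G σ u) (fun τ _ => jmap G τ u)
  · intro σ hσ
    rw [mem_filter] at hσ ⊢
    have hne : (AboveF G σ u).Nonempty := by
      rw [← Finset.card_pos, card_aboveF, hσ.2]
      omega
    exact ⟨mem_univ _, by rw [E_imap hne, hσ.2]⟩
  · intro τ hτ
    rw [mem_filter] at hτ ⊢
    have hne : (BelowF G τ u).Nonempty := by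
      rw [← Finset.card_pos, card_belowF, hτ.2]
      omega
    have := E_jmap hne
    rw [hτ.2] at this
    exact ⟨mem_univ _, by omega⟩
  · intro σ hσ
    rw [mem_filter] at hσ
    have hne : (AboveF G σ u).Nonempty := by
      rw [← Finset.card_pos, card_aboveF, hσ.2]
      omega
    exact imap_jmap hne
  · intro τ hτ
    rw [mem_filter] at hτ
    have hne : (BelowF G τ u).Nonempty := by
      rw [← Finset.card_pos, card_belowF, hτ.2]
      omega
    exact jmap_imap hne

lemma card_fiber_eq (u : V) : ∀ j ≤ G.degree u,
    ((univ : Finset (V ≃ Fin (Fintype.card V))).filter (fun σ => E G σ u = j)).card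
      = ((univ : Finset (V ≃ Fin (Fintype.card V))).filter (fun σ => E G σ u = 0)).card := by
  intro j
  induction j with
  | zero => intro _; rfl
  | succ m ih =>
    intro hm
    rw [← card_fiber_succ G u (by omega : m < G.degree u)]
    exact ih (by omega)

lemma card_sigma_eq (u : V) :
    (G.degree u + 1) *
      ((univ : Finset (V ≃ Fin (Fintype.card V))).filter (fun σ => E G σ u = 0)).card
      = Fintype.card (V ≃ Fin (Fintype.card V)) := by
  classical
  have h1 : ((univ : Finset (V ≃ Fin (Fintype.card V)))).card
      = ∑ j ∈ Finset.range (G.degree u + 1),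
        ((univ : Finset (V ≃ Fin (Fintype.card V))).filter (fun σ => E G σ u = j)).card := by
    apply Finset.card_eq_sum_card_fiberwise
    intro σ _
    rw [Finset.mem_coe, Finset.mem_range]
    exact Nat.lt_succ_of_le (E_le_degree G σ u)
  rw [Finset.sum_congr rfl (fun j hj => card_fiber_eq G u j (by
      rw [Finset.mem_range] at hj; omega)), Finset.sum_const, Finset.card_range,
      smul_eq_mul] at h1
  rw [← h1]
  exact Finset.card_univ

end fibers

section avg
variable (G : SimpleGraph V) [DecidableRel G.Adj] (c : V → ℝ) (κ : V → ℤ)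


lemma sum_f_E (u : V) (f : ℕ → ℝ) :
    ∑ σ : V ≃ Fin (Fintype.card V), f (E G σ u)
      = (((univ.filter (fun σ : V ≃ Fin (Fintype.card V) => E G σ u = 0)).card : ℝ))
        * ∑ j ∈ Finset.range (G.degree u + 1), f j := by
  classical
  have h := Finset.sum_fiberwise_of_maps_to (s := (univ : Finset (V ≃ Fin (Fintype.card V)))) (g := fun σ => E G σ u)
    (t := Finset.range (G.degree u + 1))
    (fun σ _ => Finset.mem_range.2 (Nat.lt_succ_of_le (E_le_degree G σ u)))
    (fun σ => f (E G σ u))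
  rw [← h, Finset.mul_sum]
  apply Finset.sum_congr rfl
  intro j hj
  rw [Finset.mem_range] at hj
  have hcg : ∀ σ ∈ univ.filter (fun σ : V ≃ Fin (Fintype.card V) => E G σ u = j),
      f (E G σ u) = f j := by
    intro σ hσ; rw [mem_filter] at hσ; rw [hσ.2]
  rw [Finset.sum_congr rfl hcg, Finset.sum_const, nsmul_eq_mul, card_fiber_eq G u j (by omega)]

lemma avg_vertex (u : V) (hκ0 : 0 ≤ κ u) (hκd : κ u ≤ (G.degree u : ℤ)) :
    ∑ σ : V ≃ Fin (Fintype.card V), ((max 0 ((E G σ u : ℤ) - κ u) : ℤ) : ℝ)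
      = (Fintype.card (V ≃ Fin (Fintype.card V)) : ℝ) *
        ((((G.degree u : ℝ) - κ u) * ((G.degree u : ℝ) - κ u + 1)) / (2 * (G.degree u + 1))) := by
  classical
  have h1 := sum_f_E G u (fun j => ((max 0 ((j:ℤ) - κ u) : ℤ) : ℝ))
  set A : ℕ := (univ.filter (fun σ : V ≃ Fin (Fintype.card V) => E G σ u = 0)).card with hA
  have hN : ((G.degree u : ℝ) + 1) * (A : ℝ)
      = (Fintype.card (V ≃ Fin (Fintype.card V)) : ℝ) := by
    have := card_sigma_eq G u
    rw [hA]
    exact_mod_cast congrArg (Nat.cast : ℕ → ℝ) this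
  have h2 := gauss_max (G.degree u) (κ u) hκ0 hκd
  have h3 := congrArg (Int.cast : ℤ → ℝ) h2
  push_cast at h3
  rw [h1, ← hN]
  push_cast
  have hd1 : ((G.degree u : ℝ) + 1) ≠ 0 := by positivity
  field_simp
  linear_combination (A:ℝ) * h3

lemma avg_total (hκ : ∀ u, 0 ≤ κ u ∧ κ u ≤ (G.degree u : ℤ)) :
    ∑ σ : V ≃ Fin (Fintype.card V), costE G c κ σ
      = (Fintype.card (V ≃ Fin (Fintype.card V)) : ℝ) *
        ∑ u : V, c u * (((G.degree u : ℝ) - κ u) * ((G.degree u : ℝ) - κ u + 1))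
          / (2 * (G.degree u + 1)) := by
  classical
  unfold costE
  rw [Finset.sum_comm, Finset.mul_sum]
  apply Finset.sum_congr rfl
  intro u _
  rw [← Finset.mul_sum, avg_vertex G κ u (hκ u).1 (hκ u).2]
  ring

end avg


section D
variable (G : SimpleGraph V) [DecidableRel G.Adj]

/-- walk induction -/
lemma walk_ind {P : V → Prop} (hstep : ∀ x y, P x → G.Adj x y → P y) :
    ∀ {u v : V}, G.Walk u v → P u → P v := by
  intro u v w
  induction w with
  | nil => exact id
  | cons h p ih => intro hu; exact ih (hstep _ _ hu h)

lemma const_of_adj (hG : G.Connected) {α : Sort*} (f : V → α)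
    (h : ∀ u v, G.Adj u v → f u = f v) (u v : V) : f u = f v := by
  obtain ⟨w⟩ := hG.preconnected u v
  exact walk_ind G (P := fun x => f u = f x) (fun x y hx hxy => hx.trans (h x y hxy)) w rfl

lemma ecount_concat (xs ys : List V) (w : V) (hw : w ∉ xs) :
    ecount G (xs ++ w :: ys) w = ((xs.toFinset).filter (fun v => G.Adj w v)).card := by
  have hidx : (xs ++ w :: ys).idxOf w = xs.length := by
    rw [List.idxOf_append_of_notMem hw, List.idxOf_cons_self, Nat.add_zero]
  unfold ecount
  rw [hidx, List.take_left]

lemma max_step (x : ℕ) (k : ℤ) (hk : 0 ≤ k) :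
    max 0 ((x:ℤ) + 1 - k) - max 0 ((x:ℤ) - k) = if k ≤ (x:ℤ) then 1 else 0 := by
  split_ifs with h
  · rw [max_eq_right (by omega), max_eq_right (by omega)]; ring
  · rw [max_eq_left (by omega), max_eq_left (by omega)]; ring

lemma two_point_sum {f g : V → ℝ} {u v : V} (huv : u ≠ v)
    (h : ∀ w, w ≠ u → w ≠ v → f w = g w) (hsum : ∑ w : V, f w = ∑ w : V, g w) :
    f u + f v = g u + g v := by
  classical
  have hu : u ∈ (univ : Finset V) := mem_univ u
  have hv : v ∈ (univ : Finset V).erase u := by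
    rw [mem_erase]; exact ⟨huv.symm, mem_univ v⟩
  have h1 : ∀ (F : V → ℝ), ∑ w : V, F w = F u + (F v + ∑ w ∈ ((univ.erase u).erase v), F w) := by
    intro F
    rw [← Finset.add_sum_erase _ _ hu, ← Finset.add_sum_erase _ _ hv]
  rw [h1 f, h1 g] at hsum
  have h2 : ∑ w ∈ ((univ.erase u).erase v), f w = ∑ w ∈ ((univ.erase u).erase v), g w := by
    apply Finset.sum_congr rfl
    intro w hw
    rw [mem_erase, mem_erase] at hw
    exact h w hw.2.1 hw.1
  rw [h2] at hsum
  linarith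

end D

section pair
variable (G : SimpleGraph V) [DecidableRel G.Adj] (c : V → ℝ) (κ : V → ℤ)

noncomputable def costL (l : List V) : ℝ :=
  ∑ u : V, c u * ((max 0 ((ecount G l u : ℤ) - κ u) : ℤ) : ℝ)

lemma costE_mkσ' {l : List V} (hl : l.Nodup) (hu : l.toFinset = univ) :
    costE G c κ (mkσ l hl hu) = costL G c κ l := by
  unfold costE costL
  apply Finset.sum_congr rfl
  intro u _
  rw [E_mkσ G hl hu]

variable {G c κ}

/-- the central exchange identity -/
lemma pair_exchange
    (Hc : ∀ σ τ : V ≃ Fin (Fintype.card V), costE G c κ σ = costE G c κ τ)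
    (hκ0 : ∀ u, 0 ≤ κ u)
    {u v : V} (huv : G.Adj u v) (A : Finset V) (hu : u ∉ A) (hv : v ∉ A) :
    (if (κ u : ℤ) ≤ ((A.filter (fun x => G.Adj u x)).card : ℤ) then c u else 0)
      = (if (κ v : ℤ) ≤ ((A.filter (fun x => G.Adj v x)).card : ℤ) then c v else 0) := by
  classical
  have hne : u ≠ v := huv.ne
  set rest : Finset V := ((univ \ A).erase u).erase v with hrest
  set l₁ : List V := A.toList ++ u :: v :: rest.toList with hl₁
  set l₂ : List V := A.toList ++ v :: u :: rest.toList with hl₂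
  have hrmem : ∀ x, x ∈ rest ↔ (x ∉ A ∧ x ≠ u ∧ x ≠ v) := by
    intro x
    simp only [hrest, mem_erase, mem_sdiff, mem_univ, true_and]
    tauto
  have hurest : u ∉ rest := by rw [hrmem]; tauto
  have hvrest : v ∉ rest := by rw [hrmem]; tauto
  have hnd : ∀ (a b : V), a ≠ b → a ∉ A → b ∉ A → a ∉ rest → b ∉ rest →
      (A.toList ++ a :: b :: rest.toList).Nodup := by
    intro a b hab ha hb har hbr
    rw [List.nodup_append]
    refine ⟨A.nodup_toList, ?_, ?_⟩
    · simp only [List.nodup_cons]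
      refine ⟨?_, ?_, rest.nodup_toList⟩
      · simp only [List.mem_cons, Finset.mem_toList]
        rw [not_or]
        exact ⟨hab, har⟩
      · simp only [Finset.mem_toList]
        exact hbr
    · intro x hx y hy hxy
      subst hxy
      have hxA : x ∈ A := Finset.mem_toList.1 hx
      revert hy
      simp only [List.mem_cons, Finset.mem_toList]
      rintro (h | h | h)
      · exact ha (h ▸ hxA)
      · exact hb (h ▸ hxA)
      · exact ((hrmem x).1 h).1 hxA
  have hnd₁ : l₁.Nodup := hnd u v hne hu hv hurest hvrest
  have hnd₂ : l₂.Nodup := hnd v u hne.symm hv hu hvrest hurest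
  have htf : ∀ (a b : V), a ∉ A → b ∉ A → ((a = u ∧ b = v) ∨ (a = v ∧ b = u)) →
      (A.toList ++ a :: b :: rest.toList).toFinset = univ := by
    intro a b ha hb hab2
    ext x
    simp only [List.mem_toFinset, List.mem_append, List.mem_cons, Finset.mem_toList,
      mem_univ, iff_true]
    by_cases hxA : x ∈ A
    · exact Or.inl hxA
    · by_cases hxa : x = a
      · exact Or.inr (Or.inl hxa)
      · by_cases hxb : x = b
        · exact Or.inr (Or.inr (Or.inl hxb))
        · refine Or.inr (Or.inr (Or.inr ((hrmem x).2 ⟨hxA, ?_, ?_⟩)))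
          · rcases hab2 with ⟨rfl, rfl⟩ | ⟨rfl, rfl⟩ <;> tauto
          · rcases hab2 with ⟨rfl, rfl⟩ | ⟨rfl, rfl⟩ <;> tauto
  have htf₁ : l₁.toFinset = univ := htf u v hu hv (Or.inl ⟨rfl, rfl⟩)
  have htf₂ : l₂.toFinset = univ := htf v u hv hu (Or.inr ⟨rfl, rfl⟩)
  set a := (A.filter (fun x => G.Adj u x)).card with ha
  set b := (A.filter (fun x => G.Adj v x)).card with hb
  have huA : u ∉ A.toList := by rw [Finset.mem_toList]; exact hu
  have hvA : v ∉ A.toList := by rw [Finset.mem_toList]; exact hv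
  have he₁u : ecount G l₁ u = a := by
    rw [hl₁, ecount_concat G A.toList (v :: rest.toList) u huA, Finset.toList_toFinset]
  have he₂v : ecount G l₂ v = b := by
    rw [hl₂, ecount_concat G A.toList (u :: rest.toList) v hvA, Finset.toList_toFinset]
  have hins : ∀ (x : V), (A.toList ++ [x]).toFinset = insert x A := by
    intro x
    ext z
    simp only [List.mem_toFinset, List.mem_append, Finset.mem_toList, List.mem_singleton,
      Finset.mem_insert]
    tauto
  have hstep2 : ∀ (x y : V), x ∉ A → y ∉ A → x ≠ y → G.Adj y x →
      ecount G (A.toList ++ x :: y :: rest.toList) y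
        = (A.filter (fun z => G.Adj y z)).card + 1 := by
    intro x y hx hy hxy hadj
    have hyx : y ∉ A.toList ++ [x] := by
      intro hmem
      rcases List.mem_append.1 hmem with h | h
      · exact hy (Finset.mem_toList.1 h)
      · rw [List.mem_singleton] at h
        exact hxy h.symm
    have hrw : A.toList ++ x :: y :: rest.toList = (A.toList ++ [x]) ++ y :: rest.toList := by
      simp
    rw [hrw, ecount_concat G _ _ y hyx, hins x, Finset.filter_insert, if_pos hadj,
      Finset.card_insert_of_notMem]
    rw [Finset.mem_filter]
    rintro ⟨h, -⟩
    exact hx h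
  have he₁v : ecount G l₁ v = b + 1 := hstep2 u v hu hv hne huv.symm
  have he₂u : ecount G l₂ u = a + 1 := hstep2 v u hv hu hne.symm huv
  have hother : ∀ w, w ≠ u → w ≠ v → ecount G l₁ w = ecount G l₂ w := by
    intro w hwu hwv
    by_cases hwA : w ∈ A
    · obtain ⟨xs, ys, hxy⟩ := List.append_of_mem (Finset.mem_toList.2 hwA)
      have h1 : l₁ = xs ++ w :: (ys ++ u :: v :: rest.toList) := by
        rw [hl₁, hxy]; simp
      have h2 : l₂ = xs ++ w :: (ys ++ v :: u :: rest.toList) := by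
        rw [hl₂, hxy]; simp
      have hwxs : w ∉ xs := by
        have hnd' := hnd₁
        rw [h1, List.nodup_middle, List.nodup_cons] at hnd'
        intro hmem
        exact hnd'.1 (List.mem_append_left _ hmem)
      rw [h1, h2, ecount_concat G _ _ w hwxs, ecount_concat G _ _ w hwxs]
    · have hwrest : w ∈ rest := (hrmem w).2 ⟨hwA, hwu, hwv⟩
      obtain ⟨xs, ys, hxy⟩ := List.append_of_mem (Finset.mem_toList.2 hwrest)
      have h1 : l₁ = (A.toList ++ u :: v :: xs) ++ w :: ys := by
        rw [hl₁, hxy]; simp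
      have h2 : l₂ = (A.toList ++ v :: u :: xs) ++ w :: ys := by
        rw [hl₂, hxy]; simp
      have hwxs₁ : w ∉ A.toList ++ u :: v :: xs := by
        have hnd' := hnd₁
        rw [h1, List.nodup_append] at hnd'
        intro hmem
        exact hnd'.2.2 w hmem w List.mem_cons_self rfl
      have hwxs₂ : w ∉ A.toList ++ v :: u :: xs := by
        intro hmem
        apply hwxs₁
        simp only [List.mem_append, List.mem_cons] at hmem ⊢
        tauto
      rw [h1, h2, ecount_concat G _ _ w hwxs₁, ecount_concat G _ _ w hwxs₂]
      have hsame : (A.toList ++ u :: v :: xs).toFinset = (A.toList ++ v :: u :: xs).toFinset := by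
        ext z
        simp only [List.mem_toFinset, List.mem_append, List.mem_cons]
        tauto
      rw [hsame]
  have hsum : costL G c κ l₁ = costL G c κ l₂ := by
    rw [← costE_mkσ' G c κ hnd₁ htf₁, ← costE_mkσ' G c κ hnd₂ htf₂]
    exact Hc _ _
  have h2pt := two_point_sum hne
    (f := fun w => c w * ((max 0 ((ecount G l₁ w : ℤ) - κ w) : ℤ) : ℝ))
    (g := fun w => c w * ((max 0 ((ecount G l₂ w : ℤ) - κ w) : ℤ) : ℝ))
    (fun w hwu hwv => by beta_reduce; rw [hother w hwu hwv]) hsum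
  simp only [he₁u, he₁v, he₂u, he₂v] at h2pt
  have mu : ((max 0 (((a:ℤ)+1) - κ u) : ℤ) : ℝ) - ((max 0 ((a:ℤ) - κ u) : ℤ) : ℝ)
      = if (κ u:ℤ) ≤ (a:ℤ) then (1:ℝ) else 0 := by
    rw [← Int.cast_sub, max_step a (κ u) (hκ0 u)]
    split_ifs <;> simp
  have mv : ((max 0 (((b:ℤ)+1) - κ v) : ℤ) : ℝ) - ((max 0 ((b:ℤ) - κ v) : ℤ) : ℝ)
      = if (κ v:ℤ) ≤ (b:ℤ) then (1:ℝ) else 0 := by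
    rw [← Int.cast_sub, max_step b (κ v) (hκ0 v)]
    split_ifs <;> simp
  have hcast : ∀ m : ℕ, ((m + 1 : ℕ) : ℤ) = (m : ℤ) + 1 := by intro m; push_cast; ring
  rw [hcast a, hcast b] at h2pt
  have key : c u * (if (κ u:ℤ) ≤ (a:ℤ) then (1:ℝ) else 0)
      = c v * (if (κ v:ℤ) ≤ (b:ℤ) then (1:ℝ) else 0) := by
    rw [← mu, ← mv]
    ring_nf
    ring_nf at h2pt
    linarith
  split_ifs at key ⊢ with h1 h2 <;> simp_all

end pair

section derive
variable {G : SimpleGraph V} [DecidableRel G.Adj] {c : V → ℝ} {κ : V → ℤ}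

lemma if_pair {p q : Prop} [Decidable p] [Decidable q] {x y : ℝ}
    (h : (if p then x else 0) = (if q then y else 0)) (hx : 0 < x) (hy : 0 < y) :
    (p ↔ q) ∧ (p → x = y) := by
  split_ifs at h with h1 h2 h2
  · exact ⟨iff_of_true h1 h2, fun _ => h⟩
  · exact absurd h (ne_of_gt hx)
  · exact absurd h.symm (ne_of_gt hy)
  · exact ⟨iff_of_false h1 h2, fun hp => absurd hp h1⟩

lemma edge_zero (Hc : ∀ σ τ : V ≃ Fin (Fintype.card V), costE G c κ σ = costE G c κ τ)
    (hc : ∀ u, 0 < c u) (hκ : ∀ u, 0 ≤ κ u ∧ κ u ≤ (G.degree u : ℤ))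
    {u v : V} (huv : G.Adj u v) :
    (κ u = 0 ↔ κ v = 0) ∧ (κ u = 0 → c u = c v) := by
  have h := pair_exchange Hc (fun u => (hκ u).1) huv ∅ (notMem_empty u) (notMem_empty v)
  simp only [Finset.filter_empty, Finset.card_empty, Nat.cast_zero] at h
  have hu0 := (hκ u).1
  have hv0 := (hκ v).1
  have h1 : ((κ u ≤ (0:ℤ)) ↔ (κ v ≤ (0:ℤ))) ∧ ((κ u ≤ (0:ℤ)) → c u = c v) :=
    if_pair h (hc u) (hc v)
  constructor
  · constructor
    · intro h0; have := h1.1.1 (by omega); omega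
    · intro h0; have := h1.1.2 (by omega); omega
  · intro h0; exact h1.2 (by omega)

lemma edge_deg (Hc : ∀ σ τ : V ≃ Fin (Fintype.card V), costE G c κ σ = costE G c κ τ)
    (hc : ∀ u, 0 < c u) (hκ : ∀ u, 0 ≤ κ u ∧ κ u ≤ (G.degree u : ℤ))
    {u v : V} (huv : G.Adj u v) :
    ((κ u = (G.degree u : ℤ)) ↔ (κ v = (G.degree v : ℤ))) ∧
      (κ u ≠ (G.degree u : ℤ) → c u = c v) := by
  classical
  set A : Finset V := univ \ {u, v} with hA
  have hu : u ∉ A := by simp [hA]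
  have hv : v ∉ A := by simp [hA]
  have hfu : A.filter (fun z => G.Adj u z) = (G.neighborFinset u).erase v := by
    ext z
    simp only [hA, Finset.mem_filter, Finset.mem_sdiff, Finset.mem_univ, true_and,
      Finset.mem_insert, Finset.mem_singleton, Finset.mem_erase,
      SimpleGraph.mem_neighborFinset, not_or]
    constructor
    · rintro ⟨⟨hz1, hz2⟩, hadj⟩; exact ⟨hz2, hadj⟩
    · rintro ⟨hz2, hadj⟩; exact ⟨⟨hadj.ne', hz2⟩, hadj⟩
  have hfv : A.filter (fun z => G.Adj v z) = (G.neighborFinset v).erase u := by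
    ext z
    simp only [hA, Finset.mem_filter, Finset.mem_sdiff, Finset.mem_univ, true_and,
      Finset.mem_insert, Finset.mem_singleton, Finset.mem_erase,
      SimpleGraph.mem_neighborFinset, not_or]
    constructor
    · rintro ⟨⟨hz1, hz2⟩, hadj⟩; exact ⟨hz1, hadj⟩
    · rintro ⟨hz1, hadj⟩; exact ⟨⟨hz1, hadj.ne'⟩, hadj⟩
  have hcu : (A.filter (fun z => G.Adj u z)).card = G.degree u - 1 := by
    rw [hfu, Finset.card_erase_of_mem ((SimpleGraph.mem_neighborFinset G u v).2 huv)]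
    rw [SimpleGraph.card_neighborFinset_eq_degree]
  have hcv : (A.filter (fun z => G.Adj v z)).card = G.degree v - 1 := by
    rw [hfv, Finset.card_erase_of_mem ((SimpleGraph.mem_neighborFinset G v u).2 huv.symm)]
    rw [SimpleGraph.card_neighborFinset_eq_degree]
  have hdu : 1 ≤ G.degree u := by
    rw [← SimpleGraph.card_neighborFinset_eq_degree]
    exact Finset.card_pos.2 ⟨v, (SimpleGraph.mem_neighborFinset G u v).2 huv⟩
  have hdv : 1 ≤ G.degree v := by
    rw [← SimpleGraph.card_neighborFinset_eq_degree]
    exact Finset.card_pos.2 ⟨u, (SimpleGraph.mem_neighborFinset G v u).2 huv.symm⟩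
  have h := pair_exchange Hc (fun u => (hκ u).1) huv A hu hv
  rw [hcu, hcv] at h
  have hcastu : ((G.degree u - 1 : ℕ) : ℤ) = (G.degree u : ℤ) - 1 := by omega
  have hcastv : ((G.degree v - 1 : ℕ) : ℤ) = (G.degree v : ℤ) - 1 := by omega
  rw [hcastu, hcastv] at h
  have h1 := if_pair h (hc u) (hc v)
  have h2u := (hκ u).2
  have h2v := (hκ v).2
  constructor
  · constructor
    · intro h0
      by_contra hne
      have : κ v ≤ (G.degree v:ℤ) - 1 := by omega
      have := h1.1.2 this
      omega
    · intro h0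
      by_contra hne
      have : κ u ≤ (G.degree u:ℤ) - 1 := by omega
      have := h1.1.1 this
      omega
  · intro h0
    exact h1.2 (by omega)

lemma edge_kappa_le (Hc : ∀ σ τ : V ≃ Fin (Fintype.card V), costE G c κ σ = costE G c κ τ)
    (hc : ∀ u, 0 < c u) (hκ : ∀ u, 0 ≤ κ u ∧ κ u ≤ (G.degree u : ℤ))
    (hlt : ∀ u, κ u < (G.degree u : ℤ))
    {u v : V} (huv : G.Adj u v) : κ u ≤ κ v := by
  classical
  obtain ⟨S, hS, hScard⟩ := Finset.exists_subset_card_eq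
    (s := (G.neighborFinset v).erase u) (n := (κ v).toNat)
    (by
      rw [Finset.card_erase_of_mem ((SimpleGraph.mem_neighborFinset G v u).2 huv.symm),
        SimpleGraph.card_neighborFinset_eq_degree]
      have := (hκ v).1
      have := hlt v
      omega)
  have hSu : u ∉ S := fun hm => (Finset.mem_erase.1 (hS hm)).1 rfl
  have hSv : v ∉ S := fun hm => G.irrefl
    ((SimpleGraph.mem_neighborFinset G v v).1 (Finset.mem_of_mem_erase (hS hm)))
  have hb : (S.filter (fun z => G.Adj v z)).card = (κ v).toNat := by
    rw [Finset.filter_true_of_mem, hScard]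
    intro z hz
    exact (SimpleGraph.mem_neighborFinset G v z).1 (Finset.mem_of_mem_erase (hS hz))
  have h := pair_exchange Hc (fun u => (hκ u).1) huv.symm S hSv hSu
  rw [hb] at h
  have hvtn : (((κ v).toNat : ℕ) : ℤ) = κ v := by
    have := (hκ v).1; omega
  rw [hvtn] at h
  rw [if_pos le_rfl] at h
  by_contra hgt
  push_neg at hgt
  have ha_le : ((S.filter (fun z => G.Adj u z)).card : ℤ) ≤ κ v := by
    have : (S.filter (fun z => G.Adj u z)).card ≤ S.card := Finset.card_filter_le _ _
    omega
  rw [if_neg (by omega)] at h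
  exact (hc v).ne' h

lemma edge_nbhd (Hc : ∀ σ τ : V ≃ Fin (Fintype.card V), costE G c κ σ = costE G c κ τ)
    (hc : ∀ u, 0 < c u) (hκ : ∀ u, 0 ≤ κ u ∧ κ u ≤ (G.degree u : ℤ))
    (hlt : ∀ u, κ u < (G.degree u : ℤ)) (hpos : ∀ u, 0 < κ u)
    {u v : V} (huv : G.Adj u v) {x : V} (hx : G.Adj v x) (hxu : x ≠ u) : G.Adj u x := by
  classical
  have hkeq : κ u = κ v :=
    le_antisymm (edge_kappa_le Hc hc hκ hlt huv) (edge_kappa_le Hc hc hκ hlt huv.symm)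
  by_contra hnadj
  obtain ⟨S', hS', hS'card⟩ := Finset.exists_subset_card_eq
    (s := ((G.neighborFinset v).erase u).erase x) (n := (κ v).toNat - 1)
    (by
      rw [Finset.card_erase_of_mem, Finset.card_erase_of_mem
        ((SimpleGraph.mem_neighborFinset G v u).2 huv.symm),
        SimpleGraph.card_neighborFinset_eq_degree]
      · have := hpos v; have := hlt v; omega
      · rw [Finset.mem_erase, SimpleGraph.mem_neighborFinset]
        exact ⟨hxu, hx⟩)
  set S : Finset V := insert x S' with hSdef
  have hxS' : x ∉ S' := fun hm => (Finset.mem_erase.1 (hS' hm)).1 rfl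
  have hScard : S.card = (κ v).toNat := by
    rw [hSdef, Finset.card_insert_of_notMem hxS', hS'card]
    have := hpos v; omega
  have hSsub : S ⊆ (G.neighborFinset v).erase u := by
    intro z hz
    rw [hSdef, Finset.mem_insert] at hz
    rcases hz with rfl | hz
    · rw [Finset.mem_erase, SimpleGraph.mem_neighborFinset]; exact ⟨hxu, hx⟩
    · exact Finset.mem_of_mem_erase (hS' hz)
  have hSu : u ∉ S := fun hm => (Finset.mem_erase.1 (hSsub hm)).1 rfl
  have hSv : v ∉ S := fun hm => G.irrefl
    ((SimpleGraph.mem_neighborFinset G v v).1 (Finset.mem_of_mem_erase (hSsub hm)))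
  have hb : (S.filter (fun z => G.Adj v z)).card = (κ v).toNat := by
    rw [Finset.filter_true_of_mem, hScard]
    intro z hz
    exact (SimpleGraph.mem_neighborFinset G v z).1 (Finset.mem_of_mem_erase (hSsub hz))
  have h := pair_exchange Hc (fun u => (hκ u).1) huv.symm S hSv hSu
  rw [hb] at h
  have hvtn : (((κ v).toNat : ℕ) : ℤ) = κ v := by
    have := (hκ v).1; omega
  rw [hvtn, if_pos le_rfl] at h
  -- a-side: filter misses x
  have hafilt : S.filter (fun z => G.Adj u z) ⊆ S.erase x := by
    intro z hz
    rw [Finset.mem_filter] at hz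
    rw [Finset.mem_erase]
    refine ⟨?_, hz.1⟩
    rintro rfl
    exact hnadj hz.2
  have ha_lt : ((S.filter (fun z => G.Adj u z)).card : ℤ) < κ v := by
    have h1 : (S.filter (fun z => G.Adj u z)).card ≤ (S.erase x).card :=
      Finset.card_le_card hafilt
    rw [Finset.card_erase_of_mem (by rw [hSdef]; exact Finset.mem_insert_self _ _), hScard] at h1
    have := hpos v; omega
  rw [if_neg (by omega)] at h
  exact (hc v).ne' h

end derive

section charac
variable {G : SimpleGraph V} [DecidableRel G.Adj] {c : V → ℝ} {κ : V → ℤ}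

theorem characterize (hG : G.Connected)
    (Hc : ∀ σ τ : V ≃ Fin (Fintype.card V), costE G c κ σ = costE G c κ τ)
    (hc : ∀ u, 0 < c u) (hκ : ∀ u, 0 ≤ κ u ∧ κ u ≤ (G.degree u : ℤ)) :
    (∀ u : V, κ u = (G.degree u : ℤ)) ∨
    ((∃ c₀ : ℝ, ∀ u : V, c u = c₀) ∧ (∀ u : V, κ u = 0)) ∨
    ((∀ u v : V, u ≠ v → G.Adj u v) ∧ (∃ c₀ : ℝ, ∀ u : V, c u = c₀) ∧
     (∃ κ₀ : ℤ, (∀ u : V, κ u = κ₀) ∧ 0 < κ₀ ∧ κ₀ < (Fintype.card V : ℤ) - 1)) := by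
  classical
  by_cases hall : ∀ u, κ u = (G.degree u : ℤ)
  · exact Or.inl hall
  push_neg at hall
  obtain ⟨w, hw⟩ := hall
  have hdprop : ∀ u v, G.Adj u v → ((κ u = (G.degree u : ℤ)) = (κ v = (G.degree v : ℤ))) :=
    fun u v h => propext (edge_deg Hc hc hκ h).1
  have hne_all : ∀ u, κ u ≠ (G.degree u : ℤ) := by
    intro u hu
    exact hw ((const_of_adj G hG (fun x => κ x = (G.degree x : ℤ)) hdprop u w) ▸ hu)
  have hlt : ∀ u, κ u < (G.degree u : ℤ) := fun u => lt_of_le_of_ne (hκ u).2 (hne_all u)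
  have hcc : ∀ u v : V, c u = c v :=
    const_of_adj G hG c (fun u v h => (edge_deg Hc hc hκ h).2 (hne_all u))
  by_cases hz : ∀ u, κ u = 0
  · exact Or.inr (Or.inl ⟨⟨c w, fun u => hcc u w⟩, hz⟩)
  right; right
  push_neg at hz
  obtain ⟨w', hw'⟩ := hz
  have hzprop : ∀ u v, G.Adj u v → ((κ u = 0) = (κ v = 0)) :=
    fun u v h => propext (edge_zero Hc hc hκ h).1
  have hnz : ∀ u, κ u ≠ 0 := by
    intro u hu
    exact hw' ((const_of_adj G hG (fun x => κ x = 0) hzprop u w') ▸ hu)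
  have hpos : ∀ u, 0 < κ u := fun u => lt_of_le_of_ne (hκ u).1 (Ne.symm (hnz u))
  have hcomplete : ∀ u v : V, u ≠ v → G.Adj u v := by
    intro u v huv
    have hP : (v = u ∨ G.Adj u v) := by
      obtain ⟨p⟩ := hG.preconnected u v
      refine walk_ind G (P := fun y => y = u ∨ G.Adj u y) ?_ p (Or.inl rfl)
      intro x y hx hxy
      rcases hx with rfl | hx
      · by_cases hyu : y = x
        · exact Or.inl hyu
        · exact Or.inr hxy
      · by_cases hyu : y = u
        · exact Or.inl hyu
        · exact Or.inr (edge_nbhd Hc hc hκ hlt hpos hx hxy hyu)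
    rcases hP with rfl | h
    · exact absurd rfl huv
    · exact h
  have hkconst : ∀ u v : V, κ u = κ v :=
    const_of_adj G hG κ (fun u v h =>
      le_antisymm (edge_kappa_le Hc hc hκ hlt h) (edge_kappa_le Hc hc hκ hlt h.symm))
  refine ⟨hcomplete, ⟨c w, fun u => hcc u w⟩, ⟨κ w, fun u => hkconst u w, hpos w, ?_⟩⟩
  have h1 : κ w < (G.degree w : ℤ) := hlt w
  have h2 : G.degree w < Fintype.card V := G.degree_lt_card_verts w
  omega

end charac


section cases
variable (G : SimpleGraph V) [DecidableRel G.Adj] (c : V → ℝ) (κ : V → ℤ)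

lemma costE_case1 (h : ∀ u, κ u = (G.degree u : ℤ)) (σ : V ≃ Fin (Fintype.card V)) :
    costE G c κ σ = 0 := by
  unfold costE
  apply Finset.sum_eq_zero
  intro u _
  have h1 : (E G σ u : ℤ) ≤ κ u := by
    rw [h u]
    exact_mod_cast E_le_degree G σ u
  have h2 : max 0 ((E G σ u : ℤ) - κ u) = 0 := max_eq_left (by omega)
  rw [h2]
  simp

lemma sum_E_eq (σ : V ≃ Fin (Fintype.card V)) :
    2 * ∑ u : V, E G σ u = ∑ u : V, G.degree u := by
  have habove : ∀ u, (univ.filter (fun v => G.Adj u v ∧ σ u < σ v)).card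
      = G.degree u - E G σ u := by
    intro u
    rw [← card_above G σ u]
    congr 1
    ext v
    simp [SimpleGraph.mem_neighborFinset, and_comm]
  have hswap : ∑ u : V, E G σ u = ∑ u : V, (univ.filter (fun v => G.Adj u v ∧ σ u < σ v)).card := by
    unfold E
    have h1 : ∀ u : V, (univ.filter (fun v => G.Adj u v ∧ σ v < σ u)).card
        = ∑ v : V, (if G.Adj u v ∧ σ v < σ u then 1 else 0) := by
      intro u; rw [Finset.card_filter]
    have h2 : ∀ u : V, (univ.filter (fun v => G.Adj u v ∧ σ u < σ v)).card
        = ∑ v : V, (if G.Adj u v ∧ σ u < σ v then 1 else 0) := by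
      intro u; rw [Finset.card_filter]
    rw [Finset.sum_congr rfl (fun u _ => h1 u), Finset.sum_congr rfl (fun u _ => h2 u)]
    rw [Finset.sum_comm]
    apply Finset.sum_congr rfl
    intro a _
    apply Finset.sum_congr rfl
    intro b _
    congr 1
    rw [eq_iff_iff, G.adj_comm]
  have hle : ∀ u, E G σ u ≤ G.degree u := fun u => E_le_degree G σ u
  have : ∑ u : V, E G σ u + ∑ u : V, (G.degree u - E G σ u) = ∑ u : V, G.degree u := by
    rw [← Finset.sum_add_distrib]
    apply Finset.sum_congr rfl
    intro u _
    have := hle u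
    omega
  rw [hswap, Finset.sum_congr rfl (fun u _ => habove u)] at *
  omega

lemma costE_case2 (c₀ : ℝ) (hc : ∀ u, c u = c₀) (h : ∀ u, κ u = 0)
    (σ τ : V ≃ Fin (Fintype.card V)) : costE G c κ σ = costE G c κ τ := by
  have hval : ∀ ρ : V ≃ Fin (Fintype.card V), costE G c κ ρ = c₀ * ((∑ u : V, E G ρ u : ℕ) : ℝ) := by
    intro ρ
    unfold costE
    rw [Nat.cast_sum, Finset.mul_sum]
    apply Finset.sum_congr rfl
    intro u _
    rw [hc u, h u, sub_zero, max_eq_right (by positivity : (0:ℤ) ≤ (E G ρ u : ℤ))]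
    norm_num
  rw [hval σ, hval τ]
  have h1 := sum_E_eq G σ
  have h2 := sum_E_eq G τ
  have : ∑ u : V, E G σ u = ∑ u : V, E G τ u := by omega
  rw [this]

lemma E_complete (hcomp : ∀ u v : V, u ≠ v → G.Adj u v) (σ : V ≃ Fin (Fintype.card V)) (u : V) :
    E G σ u = (σ u : ℕ) := by
  unfold E
  have h1 : (univ.filter fun v => G.Adj u v ∧ σ v < σ u) = (univ.filter fun v => σ v < σ u) := by
    ext v
    simp only [mem_filter, mem_univ, true_and, and_iff_right_iff_imp]
    intro hlt
    have hne : v ≠ u := fun hh => by rw [hh] at hlt; exact lt_irrefl _ hlt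
    exact hcomp u v (fun hh => hne hh.symm)
  rw [h1]
  have h2 : (univ.filter fun v => σ v < σ u).card
      = ((univ : Finset (Fin (Fintype.card V))).filter fun i => i < σ u).card := by
    apply Finset.card_bij (fun v _ => σ v)
    · intro v hv
      rw [mem_filter] at hv ⊢
      exact ⟨mem_univ _, hv.2⟩
    · intro v _ v' _ h
      exact σ.injective h
    · intro i hi
      rw [mem_filter] at hi
      exact ⟨σ.symm i, by rw [mem_filter]; constructor; exact mem_univ _; simpa using hi.2, by simp⟩
  rw [h2]
  have h3 : ((univ : Finset (Fin (Fintype.card V))).filter fun i => i < σ u) = Finset.Iio (σ u) := by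
    ext i; simp
  rw [h3, Fin.card_Iio]

lemma costE_case3 (hcomp : ∀ u v : V, u ≠ v → G.Adj u v) (c₀ : ℝ) (hc : ∀ u, c u = c₀)
    (κ₀ : ℤ) (hk : ∀ u, κ u = κ₀)
    (σ τ : V ≃ Fin (Fintype.card V)) : costE G c κ σ = costE G c κ τ := by
  have hval : ∀ ρ : V ≃ Fin (Fintype.card V), costE G c κ ρ
      = ∑ i : Fin (Fintype.card V), c₀ * ((max 0 ((i : ℤ) - κ₀) : ℤ) : ℝ) := by
    intro ρ
    unfold costE
    rw [← Equiv.sum_comp ρ (fun i => c₀ * ((max 0 ((i : ℤ) - κ₀) : ℤ) : ℝ))]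
    apply Finset.sum_congr rfl
    intro u _
    rw [hc u, hk u, E_complete G hcomp ρ u]
  rw [hval σ, hval τ]

end cases

end XBeta

open XBeta in
/-- Theorem 3 of the paper: characterization of the extremal graphs for the
partial-incentives bound. -/
theorem extremal_characterization_beta (G : SimpleGraph V) [DecidableRel G.Adj]
    (hG : G.Connected)
    (c : V → ℝ) (hc : ∀ u, 0 < c u)
    (κ : V → ℤ) (hκ : ∀ u, 0 ≤ κ u ∧ κ u ≤ (G.degree u : ℤ)) :
    betaW G c κ = ∑ u : V,
        c u * (((G.degree u : ℝ) - κ u) * ((G.degree u : ℝ) - κ u + 1)) / (2 * (G.degree u + 1)) ↔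
      ((∀ u : V, κ u = (G.degree u : ℤ)) ∨
       ((∃ c₀ : ℝ, ∀ u : V, c u = c₀) ∧ (∀ u : V, κ u = 0)) ∨
       ((∀ u v : V, u ≠ v → G.Adj u v) ∧
        (∃ c₀ : ℝ, ∀ u : V, c u = c₀) ∧
        (∃ κ₀ : ℤ, (∀ u : V, κ u = κ₀) ∧ 0 < κ₀ ∧ κ₀ < (Fintype.card V : ℤ) - 1))) := by
  classical
  set RHS := ∑ u : V,
      c u * (((G.degree u : ℝ) - κ u) * ((G.degree u : ℝ) - κ u + 1)) / (2 * (G.degree u + 1))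
    with hRHS
  have hNE : Nonempty (V ≃ Fin (Fintype.card V)) := ⟨Fintype.equivFin V⟩
  have hN : (0:ℝ) < (Fintype.card (V ≃ Fin (Fintype.card V)) : ℝ) := by
    exact_mod_cast Fintype.card_pos
  have havg := avg_total G c κ hκ
  constructor
  · intro hbeta
    have hge : ∀ σ : V ≃ Fin (Fintype.card V), RHS ≤ costE G c κ σ := by
      intro σ
      rw [← hbeta]
      exact betaW_le_costE hc σ
    have hzero : ∑ σ : V ≃ Fin (Fintype.card V), (costE G c κ σ - RHS) = 0 := by
      rw [Finset.sum_sub_distrib, havg, Finset.sum_const, Finset.card_univ, nsmul_eq_mul]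
      ring
    have hall := (Finset.sum_eq_zero_iff_of_nonneg
      (fun σ _ => by linarith [hge σ] : ∀ σ ∈ (univ : Finset (V ≃ Fin (Fintype.card V))),
        0 ≤ costE G c κ σ - RHS)).1 hzero
    have Hc : ∀ σ τ : V ≃ Fin (Fintype.card V), costE G c κ σ = costE G c κ τ := by
      intro σ τ
      have h1 := hall σ (mem_univ _)
      have h2 := hall τ (mem_univ _)
      linarith
    exact characterize hG Hc hc hκ
  · intro hcase
    have Hc : ∀ σ τ : V ≃ Fin (Fintype.card V), costE G c κ σ = costE G c κ τ := by
      rcases hcase with h1 | ⟨⟨c₀, hc0⟩, h2⟩ | ⟨hcomp, ⟨c₀, hc0⟩, ⟨κ₀, hk0, _, _⟩⟩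
      · intro σ τ
        rw [costE_case1 G c κ h1 σ, costE_case1 G c κ h1 τ]
      · exact costE_case2 G c κ c₀ hc0 h2
      · exact costE_case3 G c κ hcomp c₀ hc0 κ₀ hk0
    obtain ⟨σ₀⟩ := hNE
    have hconst : ∑ σ : V ≃ Fin (Fintype.card V), costE G c κ σ
        = (Fintype.card (V ≃ Fin (Fintype.card V)) : ℝ) * costE G c κ σ₀ := by
      rw [Finset.sum_congr rfl (fun σ _ => Hc σ σ₀), Finset.sum_const, Finset.card_univ,
        nsmul_eq_mul]
    have hcost : costE G c κ σ₀ = RHS := by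
      have h1 := hconst.symm.trans havg
      exact mul_left_cancel₀ (ne_of_gt hN) h1
    apply le_antisymm
    · rw [← hcost]
      exact betaW_le_costE hc σ₀
    · apply le_betaW hc
      intro σ
      rw [Hc σ σ₀, hcost]
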